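/- Let 0 < q < 1, let m ≥ 0 be an integer, and let λ = (λ_1,λ_2) and μ = (μ_1,μ_2) be partitions in Par_2. Then ∫_{0≤x_1≤x_2≤1} x_1^m a_{λ+δ_2}(x_1,x_2) a_{μ+δ_2}(x_1,x_2) d_q x_1 d_q x_2 = q^{λ_2+μ_2+m+1} · (1−q)^2 (1 − q^{|λ|+|μ|+2m+4}) (1 − q^{λ_1−λ_2+1}) (1 − q^{μ_1−μ_2+1}) / ( (1 − q^{|λ|+|μ|+m+4}) ∏_{i=1}^2 ∏_{j=1}^2 (1 − q^{λ_i+μ_j+m+5−i−j}) ). -/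

import Mathlib

/-- The `q`-integral over the simplex `0 ≤ x_1 ≤ ⋯ ≤ x_n ≤ 1`:
`∫ f d_q x = (1-q)^n ∑_{μ ∈ Par_n} q^{|μ|} f(q^{μ_1},…,q^{μ_n})`,
the sum over all partitions `μ` with at most `n` parts. -/
noncomputable def qint (q : ℝ) (n : ℕ) (f : (Fin n → ℝ) → ℝ) : ℝ :=
  (1 - q) ^ n *
    ∑' μ : {μ : Fin n → ℕ // Antitone μ}, q ^ (∑ i, μ.1 i) * f (fun i => q ^ (μ.1 i))

/-- The alternant `a_λ(x_1,…,x_n) = det(x_i^{λ_j})`. -/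
noncomputable def alt (n : ℕ) (lam : Fin n → ℕ) (x : Fin n → ℝ) : ℝ :=
  Matrix.det (Matrix.of fun i j : Fin n => x i ^ lam j)

/-- `λ + δ_n`, where `δ_n = (n-1, n-2, …, 1, 0)` is the staircase. -/
def stair (n : ℕ) (lam : Fin n → ℕ) : Fin n → ℕ :=
  fun j => lam j + (n - 1 - (j : ℕ))

/-- q-Pochhammer symbol `(a;q)_m = ∏_{i=0}^{m-1} (1 - a q^i)`. -/
noncomputable def qpoch (a q : ℝ) (m : ℕ) : ℝ :=
  ∏ i ∈ Finset.range m, (1 - a * q ^ i)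

/-- Parts of a partition `μ ∈ Par_n`, extended by `0` beyond index `n`
(`padF μ t` is the part `μ_{t+1}` in 1-based labelling). -/
def padF {n : ℕ} (μ : Fin n → ℕ) : ℕ → ℕ := fun t => if h : t < n then μ ⟨t, h⟩ else 0

noncomputable def parEquiv : ℕ × ℕ ≃ {μ : Fin 2 → ℕ // Antitone μ} where
  toFun := fun p => ⟨![p.1 + p.2, p.1], by
    intro i j hij
    fin_cases i <;> fin_cases j <;> simp_all⟩
  invFun := fun μ => (μ.1 1, μ.1 0 - μ.1 1)
  left_inv := fun p => by simp
  right_inv := fun μ => by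
    have h : μ.1 1 ≤ μ.1 0 := μ.2 (by norm_num : (0 : Fin 2) ≤ 1)
    ext i
    fin_cases i <;> simp <;> omega

lemma prodsum (r s : ℝ) (hr0 : 0 ≤ r) (hr1 : r < 1) (hs0 : 0 ≤ s) (hs1 : s < 1) :
    ∑' p : ℕ × ℕ, r ^ p.1 * s ^ p.2 = (1 - r)⁻¹ * (1 - s)⁻¹ := by
  rw [← Summable.tsum_mul_tsum (summable_geometric_of_lt_one hr0 hr1)
      (summable_geometric_of_lt_one hs0 hs1)
      ((summable_geometric_of_lt_one hr0 hr1).mul_of_nonneg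
        (summable_geometric_of_lt_one hs0 hs1) (fun i => pow_nonneg hr0 i)
        (fun i => pow_nonneg hs0 i)),
    tsum_geometric_of_lt_one hr0 hr1, tsum_geometric_of_lt_one hs0 hs1]

lemma prodsummable (r s : ℝ) (hr0 : 0 ≤ r) (hr1 : r < 1) (hs0 : 0 ≤ s) (hs1 : s < 1) :
    Summable (fun p : ℕ × ℕ => r ^ p.1 * s ^ p.2) :=
  (summable_geometric_of_lt_one hr0 hr1).mul_of_nonneg
    (summable_geometric_of_lt_one hs0 hs1) (fun i => pow_nonneg hr0 i)
    (fun i => pow_nonneg hs0 i)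

set_option maxHeartbeats 2000000 in
lemma finalg (q n x a b : ℝ) (hn : 1 - n ≠ 0) (hab : 1 - x * a * b ≠ 0)
    (ha : 1 - x * a ≠ 0) (hb : 1 - x * b ≠ 0) (hx : 1 - x ≠ 0) :
    (1 - q) ^ 2 * ((1 - n)⁻¹ * (1 - x * a * b)⁻¹ - (1 - n)⁻¹ * (1 - x * a)⁻¹
        - (1 - n)⁻¹ * (1 - x * b)⁻¹ + (1 - n)⁻¹ * (1 - x)⁻¹)
      = x * ((1 - q) ^ 2 * (1 - x * a * b * x) * (1 - a) * (1 - b))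
        / ((1 - n) * ((1 - x * a * b) * (1 - x * a) * (1 - x * b) * (1 - x))) := by
  field_simp
  ring

theorem stmt9 (q : ℝ) (hq0 : 0 < q) (hq1 : q < 1) (m : ℕ)
    (l1 l2 m1 m2 : ℕ) (hl : l2 ≤ l1) (hm : m2 ≤ m1) :
    qint q 2 (fun x =>
        x 0 ^ m * alt 2 ![l1 + 1, l2] x * alt 2 ![m1 + 1, m2] x)
      = q ^ (l2 + m2 + m + 1)
          * ((1 - q) ^ 2 * (1 - q ^ (l1 + l2 + m1 + m2 + 2 * m + 4))
              * (1 - q ^ ((l1 : ℤ) - l2 + 1)) * (1 - q ^ ((m1 : ℤ) - m2 + 1)))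
          / ((1 - q ^ (l1 + l2 + m1 + m2 + m + 4))
              * ((1 - q ^ (l1 + m1 + m + 3)) * (1 - q ^ (l1 + m2 + m + 2))
                  * (1 - q ^ (l2 + m1 + m + 2)) * (1 - q ^ (l2 + m2 + m + 1)))) := by
  obtain ⟨d1, rfl⟩ := Nat.exists_eq_add_of_le hl
  obtain ⟨d2, rfl⟩ := Nat.exists_eq_add_of_le hm
  have hq0' : (0:ℝ) ≤ q := hq0.le
  have hp0 : ∀ X : ℕ, (0:ℝ) ≤ q ^ X := fun X => pow_nonneg hq0' X
  have hp1 : ∀ X : ℕ, q ^ (X + 1) < 1 := fun X => pow_lt_one₀ hq0' hq1 (Nat.succ_ne_zero X)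
  -- exponents
  set N := l2 + d1 + l2 + m2 + d2 + m2 + m + 3 with hN
  set A := l2 + d1 + m2 + d2 + m + 2 with hA
  set B := l2 + d1 + m2 + m + 1 with hB
  set C := l2 + m2 + d2 + m + 1 with hC
  set D := l2 + m2 + m with hD
  unfold qint
  rw [← parEquiv.tsum_eq]
  have key : ∀ p : ℕ × ℕ,
      q ^ (∑ i, (parEquiv p).1 i) *
        ((fun x : Fin 2 → ℝ =>
          x 0 ^ m * alt 2 ![l2 + d1 + 1, l2] x * alt 2 ![m2 + d2 + 1, m2] x)
          (fun i => q ^ ((parEquiv p).1 i)))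
      = (q ^ (N+1)) ^ p.1 * (q ^ (A+1)) ^ p.2
        - (q ^ (N+1)) ^ p.1 * (q ^ (B+1)) ^ p.2
        - (q ^ (N+1)) ^ p.1 * (q ^ (C+1)) ^ p.2
        + (q ^ (N+1)) ^ p.1 * (q ^ (D+1)) ^ p.2 := by
    intro p
    simp only [parEquiv, Equiv.coe_fn_mk, alt, Matrix.det_fin_two, Matrix.of_apply,
      Fin.sum_univ_two, Matrix.cons_val_zero, Matrix.cons_val_one, Matrix.head_cons,
      hN, hA, hB, hC, hD]
    ring
  rw [tsum_congr key]
  have S : ∀ X : ℕ, Summable (fun p : ℕ × ℕ => (q ^ (N+1)) ^ p.1 * (q ^ (X+1)) ^ p.2) :=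
    fun X => prodsummable _ _ (hp0 _) (hp1 _) (hp0 _) (hp1 _)
  rw [Summable.tsum_add (((S A).sub (S B)).sub (S C)) (S D), Summable.tsum_sub ((S A).sub (S B)) (S C),
    Summable.tsum_sub (S A) (S B)]
  rw [prodsum _ _ (hp0 _) (hp1 _) (hp0 _) (hp1 _), prodsum _ _ (hp0 _) (hp1 _) (hp0 _) (hp1 _),
    prodsum _ _ (hp0 _) (hp1 _) (hp0 _) (hp1 _), prodsum _ _ (hp0 _) (hp1 _) (hp0 _) (hp1 _)]
  -- clean up zpow
  rw [show ((l2 + d1 : ℕ) : ℤ) - (l2 : ℕ) + 1 = ((d1 + 1 : ℕ) : ℤ) by push_cast; ring,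
    show ((m2 + d2 : ℕ) : ℤ) - (m2 : ℕ) + 1 = ((d2 + 1 : ℕ) : ℤ) by push_cast; ring,
    zpow_natCast, zpow_natCast]
  have hne : ∀ X : ℕ, 1 - q ^ (X + 1) ≠ 0 := fun X => ne_of_gt (by linarith [hp1 X])
  have h1 : l2 + d1 + l2 + (m2 + d2) + m2 + 2 * m + 4 = (A + 1) + (D + 1) := by omega
  have h2 : l2 + d1 + l2 + (m2 + d2) + m2 + m + 4 = N + 1 := by omega
  have h3 : l2 + d1 + (m2 + d2) + m + 3 = A + 1 := by omega
  have h4 : l2 + d1 + m2 + m + 2 = B + 1 := by omega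
  have h5 : l2 + (m2 + d2) + m + 2 = C + 1 := by omega
  rw [h1, h2, h3, h4, h5]
  have e1 : q ^ (A + 1) = q ^ (D + 1) * q ^ (d1 + 1) * q ^ (d2 + 1) := by
    rw [show A + 1 = (D + 1) + (d1 + 1) + (d2 + 1) by omega, pow_add, pow_add]
  have e2 : q ^ (B + 1) = q ^ (D + 1) * q ^ (d1 + 1) := by
    rw [show B + 1 = (D + 1) + (d1 + 1) by omega, pow_add]
  have e3 : q ^ (C + 1) = q ^ (D + 1) * q ^ (d2 + 1) := by
    rw [show C + 1 = (D + 1) + (d2 + 1) by omega, pow_add]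
  have hxne : (1:ℝ) - q ^ (D + 1) * q ^ (d1 + 1) * q ^ (d2 + 1) ≠ 0 := e1 ▸ hne A
  have hyne : (1:ℝ) - q ^ (D + 1) * q ^ (d1 + 1) ≠ 0 := e2 ▸ hne B
  have hzne : (1:ℝ) - q ^ (D + 1) * q ^ (d2 + 1) ≠ 0 := e3 ▸ hne C
  rw [show q ^ (A + 1 + (D + 1)) = q ^ (A + 1) * q ^ (D + 1) from pow_add q _ _, e1, e2, e3]
  exact finalg q (q ^ (N + 1)) (q ^ (D + 1)) (q ^ (d1 + 1)) (q ^ (d2 + 1))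
    (hne N) hxne hyne hzne (hne D)
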